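/- For all positive integers n₁ and n₂, the maximum cardinality of a 2-sum (n₁,n₂)-free subset of [n₁]×[n₂] equals ⌊(n₁·n₂ + n₁ + n₂ − 1)/2⌋. -/
import Mathlib

private lemma stmt9_floor (n₁ n₂ : ℕ) :
    ⌊((n₁ : ℚ) * n₂ + n₁ + n₂ - 1) / 2⌋ = ((n₁:ℤ)*n₂+n₁+n₂-1)/2 := by
  rw [show ((n₁ : ℚ) * n₂ + n₁ + n₂ - 1) = (((n₁:ℤ)*n₂+n₁+n₂-1 : ℤ) : ℚ) by push_cast; ring,
      show (2:ℚ) = ((2:ℕ):ℚ) by norm_num, Rat.floor_intCast_div_natCast]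
  norm_num

private lemma stmt9_div2 (c : ℤ) : (2*c)/2 = c := by omega
private lemma stmt9_div2' (c : ℤ) : (2*c+1)/2 = c := by omega

theorem stmt_9 (n₁ n₂ : ℕ) (h₁ : 0 < n₁) (h₂ : 0 < n₂) :
    (∀ S : Finset (ℤ × ℤ), S ⊆ Finset.Icc (1, 1) ((n₁ : ℤ), (n₂ : ℤ)) →
      (¬ ∃ a : Fin 2 → ℤ × ℤ, (∀ i, a i ∈ S) ∧ ∑ i, a i = ((n₁ : ℤ), (n₂ : ℤ))) →
      (S.card : ℤ) ≤ ⌊((n₁ : ℚ) * n₂ + n₁ + n₂ - 1) / 2⌋) ∧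
    (∃ S : Finset (ℤ × ℤ), S ⊆ Finset.Icc (1, 1) ((n₁ : ℤ), (n₂ : ℤ)) ∧
      (¬ ∃ a : Fin 2 → ℤ × ℤ, (∀ i, a i ∈ S) ∧ ∑ i, a i = ((n₁ : ℤ), (n₂ : ℤ))) ∧
      (S.card : ℤ) = ⌊((n₁ : ℚ) * n₂ + n₁ + n₂ - 1) / 2⌋) := by
  rw [stmt9_floor n₁ n₂]
  constructor
  · -- upper bound
    intro S hS hfree
    obtain ⟨a, rfl⟩ : ∃ a, n₁ = a + 1 := ⟨n₁ - 1, by omega⟩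
    obtain ⟨c, rfl⟩ : ∃ c, n₂ = c + 1 := ⟨n₂ - 1, by omega⟩
    set b : ℤ × ℤ := (((a:ℕ)+1 : ℕ), ((c:ℕ)+1 : ℕ)) with hb
    set P : Finset (ℤ × ℤ) := Finset.Icc (1, 1) (((a+1:ℕ) : ℤ) - 1, ((c+1:ℕ) : ℤ) - 1) with hP
    set T : Finset (ℤ × ℤ) := S ∩ P with hT
    set T' : Finset (ℤ × ℤ) := T.image (fun p => b - p) with hT'
    have hcT' : T'.card = T.card := by
      rw [hT']
      exact Finset.card_image_of_injective _ (fun p q h => by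
        have := sub_right_injective h; exact this)
    have hT'P : T' ⊆ P := by
      intro q hq
      simp only [hT', Finset.mem_image] at hq
      obtain ⟨p, hp, rfl⟩ := hq
      have hp2 := (Finset.mem_inter.mp hp).2
      obtain ⟨x, y⟩ := p
      simp only [hP, hb, Finset.mem_Icc, Prod.le_def, Prod.mk_sub_mk] at hp2 ⊢
      push_cast at hp2 ⊢
      omega
    have hdisj : Disjoint T T' := by
      rw [Finset.disjoint_right]
      intro q hq' hq
      simp only [hT', Finset.mem_image] at hq'
      obtain ⟨p, hp, rfl⟩ := hq'
      refine hfree ⟨![p, b - p], ?_, ?_⟩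
      · intro i
        fin_cases i
        · simpa using (Finset.mem_inter.mp hp).1
        · simpa using (Finset.mem_inter.mp hq).1
      · simp [Fin.sum_univ_two, hb]
    have h2T : T.card + T.card ≤ P.card := by
      calc T.card + T.card = T.card + T'.card := by rw [hcT']
        _ = (T ∪ T').card := (Finset.card_union_of_disjoint hdisj).symm
        _ ≤ P.card := Finset.card_le_card
              (Finset.union_subset Finset.inter_subset_right hT'P)
    have hPcard : P.card = a * c := by
      rw [hP, Finset.Icc_prod_def, Finset.card_product]
      simp only [Int.card_Icc]
      rw [show ((a+1:ℕ) : ℤ) - 1 + 1 - 1 = (a:ℤ) by push_cast; ring,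
          show ((c+1:ℕ) : ℤ) - 1 + 1 - 1 = (c:ℤ) by push_cast; ring]
      simp
    have hPsub : P ⊆ Finset.Icc (1, 1) b := by
      intro p hp
      simp only [hP, hb, Finset.mem_Icc, Prod.le_def] at hp ⊢
      push_cast at hp ⊢
      omega
    have hBcard : (Finset.Icc ((1:ℤ),(1:ℤ)) b).card = (a+1) * (c+1) := by
      rw [hb, Finset.Icc_prod_def, Finset.card_product]
      simp only [Int.card_Icc]
      rw [show ((a+1:ℕ) : ℤ) + 1 - 1 = ((a+1:ℕ):ℤ) by ring,
          show ((c+1:ℕ) : ℤ) + 1 - 1 = ((c+1:ℕ):ℤ) by ring]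
      simp
    have hsub : S ⊆ T ∪ (Finset.Icc (1, 1) b \ P) := by
      intro p hp
      by_cases h : p ∈ P
      · exact Finset.mem_union_left _ (Finset.mem_inter.mpr ⟨hp, h⟩)
      · exact Finset.mem_union_right _ (Finset.mem_sdiff.mpr ⟨hS hp, h⟩)
    have hle : S.card ≤ T.card + (a + c + 1) := by
      have h1 : S.card ≤ T.card + (Finset.Icc ((1:ℤ),(1:ℤ)) b \ P).card :=
        le_trans (Finset.card_le_card hsub) (Finset.card_union_le _ _)
      have h2 : (Finset.Icc ((1:ℤ),(1:ℤ)) b \ P).card = a + c + 1 := by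
        rw [Finset.card_sdiff_of_subset hPsub, hPcard, hBcard]
        have : (a+1)*(c+1) = a*c + (a+c+1) := by ring
        omega
      omega
    push_cast
    rw [show ((a:ℤ)+1)*((c:ℤ)+1)+((a:ℤ)+1)+((c:ℤ)+1)-1 = (a:ℤ)*(c:ℤ)+2*(a:ℤ)+2*(c:ℤ)+2
        by ring]
    have hz : (T.card : ℤ) + (T.card : ℤ) ≤ (a:ℤ)*(c:ℤ) := by
      rw [hPcard] at h2T; exact_mod_cast h2T
    have hm : (0:ℤ) ≤ (a:ℤ)*(c:ℤ) := by positivity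
    set m := (a:ℤ)*(c:ℤ) with hmdef
    omega
  · -- construction
    refine ⟨(Finset.Icc (1:ℤ) (n₁:ℤ) ×ˢ {(n₂:ℤ)})
        ∪ ({(n₁:ℤ)} ×ˢ Finset.Icc (1:ℤ) ((n₂:ℤ)-1))
        ∪ (Finset.Icc ((n₁:ℤ)/2+1) ((n₁:ℤ)-1) ×ˢ Finset.Icc (1:ℤ) ((n₂:ℤ)-1))
        ∪ (if 2 ∣ n₁ then ({(n₁:ℤ)/2} ×ˢ Finset.Icc ((n₂:ℤ)/2+1) ((n₂:ℤ)-1)) else ∅),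
        ?_, ?_, ?_⟩
    · -- subset
      intro p hp
      by_cases hpar : 2 ∣ n₁ <;>
        [rw [if_pos hpar] at hp; rw [if_neg hpar] at hp] <;>
      · simp only [Finset.mem_union, Finset.mem_product, Finset.mem_singleton,
          Finset.mem_Icc, Finset.notMem_empty, or_false] at hp
        simp only [Finset.mem_Icc, Prod.le_def]
        omega
    · -- sum-free
      rintro ⟨f, hmem, hsum⟩
      rw [Fin.sum_univ_two] at hsum
      have hx : (f 0).1 + (f 1).1 = (n₁:ℤ) := by
        have := congrArg Prod.fst hsum; simpa using this
      have hy : (f 0).2 + (f 1).2 = (n₂:ℤ) := by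
        have := congrArg Prod.snd hsum; simpa using this
      have h0 := hmem 0
      have h1 := hmem 1
      by_cases hpar : 2 ∣ n₁ <;>
        [rw [if_pos hpar] at h0 h1; rw [if_neg hpar] at h0 h1] <;>
      · simp only [Finset.mem_union, Finset.mem_product, Finset.mem_singleton,
          Finset.mem_Icc, Finset.notMem_empty, or_false] at h0 h1
        omega
    · -- cardinality
      have e1 : Disjoint (Finset.Icc (1:ℤ) (n₁:ℤ) ×ˢ ({(n₂:ℤ)} : Finset ℤ))
          ({(n₁:ℤ)} ×ˢ Finset.Icc (1:ℤ) ((n₂:ℤ)-1)) := by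
        simp only [Finset.disjoint_left, Finset.mem_product, Finset.mem_singleton,
          Finset.mem_Icc]
        intro p h h'
        omega
      have e2 : Disjoint (Finset.Icc (1:ℤ) (n₁:ℤ) ×ˢ ({(n₂:ℤ)} : Finset ℤ)
          ∪ {(n₁:ℤ)} ×ˢ Finset.Icc (1:ℤ) ((n₂:ℤ)-1))
          (Finset.Icc ((n₁:ℤ)/2+1) ((n₁:ℤ)-1) ×ˢ Finset.Icc (1:ℤ) ((n₂:ℤ)-1)) := by
        simp only [Finset.disjoint_left, Finset.mem_union, Finset.mem_product,
          Finset.mem_singleton, Finset.mem_Icc]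
        intro p h h'
        omega
      by_cases hpar : 2 ∣ n₁
      · rw [if_pos hpar]
        have e3 : Disjoint (Finset.Icc (1:ℤ) (n₁:ℤ) ×ˢ ({(n₂:ℤ)} : Finset ℤ)
            ∪ {(n₁:ℤ)} ×ˢ Finset.Icc (1:ℤ) ((n₂:ℤ)-1)
            ∪ Finset.Icc ((n₁:ℤ)/2+1) ((n₁:ℤ)-1) ×ˢ Finset.Icc (1:ℤ) ((n₂:ℤ)-1))
            (({(n₁:ℤ)/2} : Finset ℤ) ×ˢ Finset.Icc ((n₂:ℤ)/2+1) ((n₂:ℤ)-1)) := by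
          simp only [Finset.disjoint_left, Finset.mem_union, Finset.mem_product,
            Finset.mem_singleton, Finset.mem_Icc]
          intro p h h'
          omega
        rw [Finset.card_union_of_disjoint e3, Finset.card_union_of_disjoint e2,
          Finset.card_union_of_disjoint e1, Finset.card_product, Finset.card_product,
          Finset.card_product, Finset.card_product, Finset.card_singleton,
          Finset.card_singleton, Finset.card_singleton]
        push_cast
        rw [Int.card_Icc_of_le 1 (n₁:ℤ) (by omega),
            Int.card_Icc_of_le 1 ((n₂:ℤ)-1) (by omega),
            Int.card_Icc_of_le ((n₁:ℤ)/2+1) ((n₁:ℤ)-1) (by omega),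
            Int.card_Icc_of_le ((n₂:ℤ)/2+1) ((n₂:ℤ)-1) (by omega)]
        obtain ⟨k, hk⟩ := hpar
        have hkz : (n₁:ℤ) = 2*(k:ℤ) := by exact_mod_cast congrArg (Nat.cast : ℕ → ℤ) hk
        have hd1 : (n₁:ℤ)/2 = (k:ℤ) := by omega
        rcases Nat.even_or_odd n₂ with ⟨l, hl⟩ | ⟨l, hl⟩
        · have hlz : (n₂:ℤ) = 2*(l:ℤ) := by
            have : n₂ = 2*l := by omega
            exact_mod_cast congrArg (Nat.cast : ℕ → ℤ) this
          have hd2 : (n₂:ℤ)/2 = (l:ℤ) := by omega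
          have hd3 : ((n₁:ℤ)*n₂+n₁+n₂-1)/2 = 2*(k:ℤ)*(l:ℤ)+(k:ℤ)+(l:ℤ)-1 := by
            rw [hkz, hlz,
              show (2*(k:ℤ))*(2*(l:ℤ))+2*(k:ℤ)+2*(l:ℤ)-1
                = 2*(2*(k:ℤ)*(l:ℤ)+(k:ℤ)+(l:ℤ)-1)+1 by ring, stmt9_div2']
          rw [hd1, hd2, hd3, hkz, hlz]
          ring
        · have hlz : (n₂:ℤ) = 2*(l:ℤ)+1 := by
            exact_mod_cast congrArg (Nat.cast : ℕ → ℤ) hl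
          have hd2 : (n₂:ℤ)/2 = (l:ℤ) := by omega
          have hd3 : ((n₁:ℤ)*n₂+n₁+n₂-1)/2 = 2*(k:ℤ)*(l:ℤ)+2*(k:ℤ)+(l:ℤ) := by
            rw [hkz, hlz,
              show (2*(k:ℤ))*(2*(l:ℤ)+1)+2*(k:ℤ)+(2*(l:ℤ)+1)-1
                = 2*(2*(k:ℤ)*(l:ℤ)+2*(k:ℤ)+(l:ℤ)) by ring, stmt9_div2]
          rw [hd1, hd2, hd3, hkz, hlz]
          ring
      · rw [if_neg hpar]
        have e3 : Disjoint (Finset.Icc (1:ℤ) (n₁:ℤ) ×ˢ ({(n₂:ℤ)} : Finset ℤ)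
            ∪ {(n₁:ℤ)} ×ˢ Finset.Icc (1:ℤ) ((n₂:ℤ)-1)
            ∪ Finset.Icc ((n₁:ℤ)/2+1) ((n₁:ℤ)-1) ×ˢ Finset.Icc (1:ℤ) ((n₂:ℤ)-1))
            (∅ : Finset (ℤ × ℤ)) := Finset.disjoint_empty_right _
        rw [Finset.card_union_of_disjoint e3, Finset.card_union_of_disjoint e2,
          Finset.card_union_of_disjoint e1, Finset.card_product, Finset.card_product,
          Finset.card_product, Finset.card_singleton, Finset.card_singleton,
          Finset.card_empty]
        push_cast
        rw [Int.card_Icc_of_le 1 (n₁:ℤ) (by omega),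
            Int.card_Icc_of_le 1 ((n₂:ℤ)-1) (by omega),
            Int.card_Icc_of_le ((n₁:ℤ)/2+1) ((n₁:ℤ)-1) (by omega)]
        obtain ⟨k, hkz⟩ : ∃ k : ℤ, (n₁:ℤ) = 2*k+1 := ⟨(n₁:ℤ)/2, by omega⟩
        have hd1 : (n₁:ℤ)/2 = k := by omega
        have hd3 : ((n₁:ℤ)*n₂+n₁+n₂-1)/2 = (k+1)*(n₂:ℤ)+k := by
          rw [hkz, show (2*k+1)*(n₂:ℤ)+(2*k+1)+(n₂:ℤ)-1
            = 2*((k+1)*(n₂:ℤ)+k) by ring, stmt9_div2]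
        rw [hd1, hd3, hkz]
        ring
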